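/- Let μ ∈ ℂ and let λ : ℕ → ℂ be the coherent-state coefficient sequence λ_n = e^{-|μ|²/2} μ^n/√(n!). For each k ∈ ℕ define η̃_k : ℕ → ℂ by η̃_k(n) = λ_{n+k} · 2^{-(n+k)/2} · (Nat.choose (n+k) k)^{1/2}. If η : ℕ → ℂ is square-summable (Σ_n |η_n|² < ∞) and Σ_n conj(η_n)·η̃_0(n) = 0, then Σ_n conj(η_n)·η̃_k(n) = 0 for every k ∈ ℕ. (Necessity direction of Theorem 1: when the embedded single-mode state is a coherent state, any projector orthogonal to the even-annihilated vectors is automatically orthogonal to the odd ones, so no GYNI violation is possible.) -/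

import Mathlib

open scoped BigOperators

/-- Necessity direction of Theorem 1: when the embedded single-mode state is a
coherent state, any square-summable vector orthogonal to `η̃_0` is orthogonal
to every `η̃_k`, so no GYNI violation is possible. -/
theorem coherent_state_orthogonality_propagates
    (μ : ℂ) (lam : ℕ → ℂ)
    (hlam : ∀ n : ℕ, lam n =
      ((Real.exp (-(‖μ‖ ^ 2) / 2) : ℝ) : ℂ) * μ ^ n /
        ((Real.sqrt (Nat.factorial n) : ℝ) : ℂ))
    (eta : ℕ → ℕ → ℂ)
    (heta : ∀ k n : ℕ, eta k n = lam (n + k) *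
      (((2 : ℝ) ^ (-((n + k : ℕ) : ℝ) / 2) : ℝ) : ℂ) *
      ((Real.sqrt (Nat.choose (n + k) k : ℝ) : ℝ) : ℂ))
    (η : ℕ → ℂ) (hη : Summable (fun n : ℕ => ‖η n‖ ^ 2))
    (horth : ∑' n : ℕ, (starRingEnd ℂ) (η n) * eta 0 n = 0) :
    ∀ k : ℕ, ∑' n : ℕ, (starRingEnd ℂ) (η n) * eta k n = 0 := by
  intro k
  set c : ℂ := μ ^ k * (((2 : ℝ) ^ (-(k : ℝ) / 2) : ℝ) : ℂ) /
      ((Real.sqrt (Nat.factorial k) : ℝ) : ℂ) with hc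
  have hkey : ∀ n : ℕ, eta k n = c * eta 0 n := by
    intro n
    rw [heta, heta, hlam, hlam]
    have h1 : (2 : ℝ) ^ (-((n + k : ℕ) : ℝ) / 2) =
        (2 : ℝ) ^ (-(n : ℝ) / 2) * (2 : ℝ) ^ (-(k : ℝ) / 2) := by
      rw [← Real.rpow_add (by norm_num : (0:ℝ) < 2)]
      push_cast
      ring_nf
    have h2 : Real.sqrt (Nat.factorial (n + k)) =
        Real.sqrt ((Nat.choose (n + k) k : ℝ)) * Real.sqrt (Nat.factorial k) *
          Real.sqrt (Nat.factorial n) := by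
      rw [← Real.sqrt_mul (by positivity), ← Real.sqrt_mul (by positivity)]
      congr 1
      have := Nat.choose_mul_factorial_mul_factorial (Nat.le_add_left k n)
      rw [Nat.add_sub_cancel] at this
      push_cast [← this]
      ring
    have hfn : ((Real.sqrt (Nat.factorial n) : ℝ) : ℂ) ≠ 0 := by
      norm_cast
      positivity
    have hfk : ((Real.sqrt (Nat.factorial k) : ℝ) : ℂ) ≠ 0 := by
      norm_cast
      positivity
    have hfc : ((Real.sqrt ((Nat.choose (n + k) k : ℝ)) : ℝ) : ℂ) ≠ 0 := by
      norm_cast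
      have : 0 < Nat.choose (n + k) k := Nat.choose_pos (Nat.le_add_left k n)
      positivity
    simp only [Nat.add_zero, Nat.choose_zero_right, Nat.cast_one, Real.sqrt_one,
      Complex.ofReal_one, mul_one, hc, h1, h2, pow_add]
    push_cast
    field_simp
  calc ∑' n : ℕ, (starRingEnd ℂ) (η n) * eta k n
      = ∑' n : ℕ, c * ((starRingEnd ℂ) (η n) * eta 0 n) := by
        apply tsum_congr; intro n; rw [hkey]; ring
    _ = c * ∑' n : ℕ, (starRingEnd ℂ) (η n) * eta 0 n := tsum_mul_left
    _ = 0 := by rw [horth, mul_zero]
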